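/- Let d ≥ 3 and β ∈ [0,1/2], and for β ≤ β_0 define I(β) = (1−2β)·h((1/(d−2))·(2β/(1−2β))). Then I is concave and increasing in β on [0, β_0], where β_0 < (1/2)·(d−2)/(d−1), and I(β) admits the expansion I(β) = (2β/(d−2))·log₂((d−2)(1−2β)e/(2β)) + O(d^{−2}) as d → ∞ for fixed β bounded away from 1/2. -/

import Mathlib

set_option maxHeartbeats 1000000
open Real

/-- Binary entropy `h(p) = −p log₂ p − (1−p) log₂(1−p)`. -/
noncomputable def binEnt (p : ℝ) : ℝ := -p * Real.logb 2 p - (1 - p) * Real.logb 2 (1 - p)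

/-- The leakage function `I(β) = (1−2β)·h((1/(d−2))·(2β/(1−2β)))`. -/
noncomputable def Ileak (d : ℕ) (β : ℝ) : ℝ :=
  (1 - 2 * β) * binEnt ((1 / ((d : ℝ) - 2)) * (2 * β / (1 - 2 * β)))

noncomputable def tfun (a β : ℝ) : ℝ := 2*β/(a*(1-2*β))
noncomputable def Gfun (a β : ℝ) : ℝ := (1-2*β) * Real.binEntropy (tfun a β)
noncomputable def Gd (a β : ℝ) : ℝ :=
  -2 * Real.binEntropy (tfun a β)
    + 2*(Real.log (1 - tfun a β) - Real.log (tfun a β)) * (a*(1-2*β))⁻¹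

lemma aux_bounds {a β : ℝ} (ha : 0 < a) (hβ : 0 < β) (hβ1 : β < a/(2*(a+1))) :
    0 < 1 - 2*β ∧ 0 < tfun a β ∧ tfun a β < 1 := by
  have h2 : (0:ℝ) < 1-2*β := by
    have : β < 1/2 := lt_of_lt_of_le hβ1 (by
      rw [div_le_div_iff₀ (by positivity) (by norm_num)]; nlinarith)
    linarith
  have hv : (0:ℝ) < a*(1-2*β) := mul_pos ha h2
  have hw : 2*β < a*(1-2*β) := by
    rw [lt_div_iff₀ (by positivity)] at hβ1
    nlinarith
  refine ⟨h2, by unfold tfun; positivity, ?_⟩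
  unfold tfun; rw [div_lt_one hv]; exact hw

lemma hasDerivAt_tfun {a β : ℝ} (ha : a ≠ 0) (h2 : 1-2*β ≠ 0) :
    HasDerivAt (tfun a) (2/(a*(1-2*β)^2)) β := by
  have hv : a*(1-2*β) ≠ 0 := mul_ne_zero ha h2
  have h1 : HasDerivAt (fun β : ℝ => 2*β) 2 β := by
    simpa using (hasDerivAt_id β).const_mul (2:ℝ)
  have hlin : HasDerivAt (fun β : ℝ => 1-2*β) (-2) β := by
    simpa using ((hasDerivAt_id β).const_mul (2:ℝ)).const_sub (1:ℝ)
  have h2' : HasDerivAt (fun β : ℝ => a*(1-2*β)) (a * (-2)) β := hlin.const_mul a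
  have := h1.div h2' hv
  refine this.congr_deriv ?_; symm
  field_simp; ring

lemma hasDerivAt_Gfun {a β : ℝ} (ha : a ≠ 0) (h2 : 1-2*β ≠ 0)
    (ht0 : tfun a β ≠ 0) (ht1 : tfun a β ≠ 1) :
    HasDerivAt (Gfun a) (Gd a β) β := by
  have hT := hasDerivAt_tfun ha h2
  have hH := (Real.hasDerivAt_binEntropy ht0 ht1).comp β hT
  have hlin : HasDerivAt (fun β : ℝ => 1-2*β) (-2) β := by
    simpa using ((hasDerivAt_id β).const_mul (2:ℝ)).const_sub (1:ℝ)
  have := hlin.mul hH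
  refine this.congr_deriv ?_; symm
  simp only [Function.comp_apply, Pi.sub_apply]
  unfold Gd
  have hv : a*(1-2*β) ≠ 0 := mul_ne_zero ha h2
  field_simp

lemma hasDerivAt_Gd {a β : ℝ} (ha : 0 < a) (hβ : 0 < β) (hβ1 : β < a/(2*(a+1))) :
    HasDerivAt (Gd a)
      (-4/((tfun a β)*(1-tfun a β)*a^2*(1-2*β)^3)) β := by
  obtain ⟨h2, ht0, ht1⟩ := aux_bounds ha hβ hβ1
  have hv : (0:ℝ) < a*(1-2*β) := mul_pos ha h2
  have hw : 2*β < a*(1-2*β) := by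
    have := ht1; unfold tfun at this; rwa [div_lt_one hv] at this
  have hT := hasDerivAt_tfun ha.ne' h2.ne'
  have hH := (Real.hasDerivAt_binEntropy ht0.ne' ht1.ne).comp β hT
  have hone : HasDerivAt (fun β : ℝ => 1 - tfun a β) (-(2/(a*(1-2*β)^2))) β := hT.const_sub 1
  have hlog1 : HasDerivAt (fun β : ℝ => Real.log (1 - tfun a β))
      ((1 - tfun a β)⁻¹ * -(2/(a*(1-2*β)^2))) β :=
    (Real.hasDerivAt_log (by linarith)).comp β hone
  have hlog2 : HasDerivAt (fun β : ℝ => Real.log (tfun a β))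
      ((tfun a β)⁻¹ * (2/(a*(1-2*β)^2))) β :=
    (Real.hasDerivAt_log ht0.ne').comp β hT
  have hlin : HasDerivAt (fun β : ℝ => 1-2*β) (-2) β := by
    simpa using ((hasDerivAt_id β).const_mul (2:ℝ)).const_sub (1:ℝ)
  have hva : HasDerivAt (fun β : ℝ => a*(1-2*β)) (a * (-2)) β := hlin.const_mul a
  have hinv : HasDerivAt (fun β : ℝ => (a*(1-2*β))⁻¹) (-(a*(-2))/(a*(1-2*β))^2) β :=
    hva.inv hv.ne'
  have hA := hH.const_mul (-2:ℝ)
  have hB := ((hlog1.sub hlog2).const_mul (2:ℝ)).mul hinv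
  have := hA.add hB
  refine this.congr_deriv ?_; symm
  simp only [Function.comp_apply, Pi.sub_apply]
  have h1t : (0:ℝ) < 1 - tfun a β := by linarith
  have htv : tfun a β = 2*β/(a*(1-2*β)) := rfl
  set L1 := Real.log (1 - tfun a β)
  set L2 := Real.log (tfun a β)
  rw [htv] at *
  have hβne : (2:ℝ)*β ≠ 0 := by positivity
  have hwne : a*(1-2*β) - 2*β ≠ 0 := by nlinarith
  rw [show (1 - 2*β/(a*(1-2*β))) = (a*(1-2*β) - 2*β)/(a*(1-2*β)) by field_simp]
  field_simp
  ring

lemma binEnt_eq (p : ℝ) : binEnt p = (Real.log 2)⁻¹ * Real.binEntropy p := by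
  simp only [binEnt, Real.binEntropy, Real.logb, Real.log_inv, div_eq_mul_inv]
  ring

lemma part1 : ∀ d : ℕ, 3 ≤ d → ∀ yd : ℝ, 0 < yd → yd ^ (d - 1) + yd - 1 = 0 →
      let β0 : ℝ := (1 / 2) * (1 + 1 / (((d : ℝ) - 2) * (1 - yd)))⁻¹
      ConcaveOn ℝ (Set.Icc 0 β0) (Ileak d) ∧
      MonotoneOn (Ileak d) (Set.Icc 0 β0) ∧
      β0 < (1 / 2) * ((d : ℝ) - 2) / ((d : ℝ) - 1) := by
  intro d hd yd hyd hroot β0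
  have hd3 : (3:ℝ) ≤ (d:ℝ) := by exact_mod_cast hd
  obtain ⟨a, ha_def⟩ : ∃ a:ℝ, a = (d:ℝ)-2 := ⟨_, rfl⟩
  have ha1 : (1:ℝ) ≤ a := by rw [ha_def]; linarith
  have ha : (0:ℝ) < a := by linarith
  have hyd1 : yd < 1 := by
    by_contra h
    push_neg at h
    have : (1:ℝ) ≤ yd ^ (d-1) := one_le_pow₀ h
    linarith
  obtain ⟨M, hM_def⟩ : ∃ M:ℝ, M = a * (1-yd) := ⟨_, rfl⟩
  have hM : 0 < M := by rw [hM_def]; exact mul_pos ha (by linarith)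
  have hMa : M < a := by rw [hM_def]; nlinarith
  have hβ0eq : β0 = M/(2*(M+1)) := by
    show (1/2) * (1 + 1/(((d:ℝ)-2)*(1-yd)))⁻¹ = M/(2*(M+1))
    rw [← ha_def, ← hM_def]
    rw [show (1 + 1/M) = (M+1)/M by field_simp]
    rw [inv_div]
    have h1 : M+1 ≠ 0 := by positivity
    field_simp
  have hβ0pos : 0 < β0 := by rw [hβ0eq]; positivity
  have hβmax : β0 < a/(2*(a+1)) := by
    rw [hβ0eq, div_lt_div_iff₀ (by positivity) (by positivity)]
    nlinarith
  have h2β0 : 1 - 2*β0 = 1/(M+1) := by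
    have h1 : M+1 ≠ 0 := by positivity
    rw [hβ0eq]; field_simp; ring
  have htβ0 : tfun a β0 = 1 - yd := by
    have hyd_eq : 1 - yd = M/a := by rw [hM_def]; field_simp
    unfold tfun
    rw [h2β0, hβ0eq, hyd_eq]
    have h1 : M+1 ≠ 0 := by positivity
    field_simp
  have hL : Real.log (1-yd) = (a+1) * Real.log yd := by
    have hpow : yd ^ (d-1) = 1 - yd := by linarith
    have h1 : Real.log (yd^(d-1)) = ((d-1:ℕ):ℝ) * Real.log yd := Real.log_pow (n := d-1) (x := yd)
    rw [hpow] at h1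
    rw [h1]
    congr 1
    rw [Nat.cast_sub (by omega : 1 ≤ d), ha_def]
    push_cast
    ring
  have hBE : Real.binEntropy (1-yd) = -(1-yd)*((a+1)*Real.log yd) - yd*Real.log yd := by
    simp only [Real.binEntropy, Real.log_inv]
    rw [show (1 - (1-yd)) = yd by ring, hL]
    ring
  have hGdβ0 : Gd a β0 = 0 := by
    unfold Gd
    rw [htβ0, show (1 - (1-yd)) = yd by ring, hBE, h2β0, hL, hM_def]
    have h1yd : (0:ℝ) < 1 - yd := by linarith
    have hK : (0:ℝ) < a*(1-yd)+1 := by positivity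
    field_simp
    ring
  have hlog2 : (0:ℝ) < Real.log 2 := Real.log_pos (by norm_num)
  have hIeq : Ileak d = fun β => (Real.log 2)⁻¹ * Gfun a β := by
    funext β
    unfold Ileak Gfun
    rw [binEnt_eq]
    rw [show (1 / ((d:ℝ) - 2)) * (2 * β / (1 - 2 * β)) = tfun a β by
      unfold tfun; rw [← ha_def, div_mul_div_comm, one_mul]]
    ring
  have hcond : ∀ x : ℝ, 0 < x → x < a/(2*(a+1)) →
      HasDerivAt (Ileak d) ((Real.log 2)⁻¹ * Gd a x) x := by
    intro x hx hx'
    obtain ⟨h2, ht0, ht1⟩ := aux_bounds ha hx hx'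
    rw [hIeq]
    exact (hasDerivAt_Gfun ha.ne' h2.ne' ht0.ne' ht1.ne).const_mul _
  have hhalf : a/(2*(a+1)) < 1/2 := by
    rw [div_lt_div_iff₀ (by positivity) (by norm_num)]
    nlinarith
  have hcontI : ContinuousOn (Ileak d) (Set.Icc 0 β0) := by
    rw [hIeq]
    intro x hx
    have hx2 : 1 - 2*x ≠ 0 := by
      have h1 : x ≤ β0 := hx.2
      have : x < 1/2 := by linarith [hβmax, hhalf]
      intro h; linarith [h]
    have htc : ContinuousAt (tfun a) x := by
      have : ContinuousAt (fun β : ℝ => 2*β/(a*(1-2*β))) x :=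
        ContinuousAt.div (by fun_prop) (by fun_prop) (mul_ne_zero ha.ne' hx2)
      exact this
    exact (continuousAt_const.mul ((by fun_prop : ContinuousAt (fun β : ℝ => 1-2*β) x).mul
      (Real.binEntropy_continuous.continuousAt.comp htc))).continuousWithinAt
  have hGdnonneg : ∀ x : ℝ, 0 < x → x < β0 → 0 ≤ Gd a x := by
    intro x hx hxβ0
    have hanti : AntitoneOn (Gd a) (Set.Icc x β0) := by
      apply antitoneOn_of_deriv_nonpos (convex_Icc _ _)
      · intro z hz
        have hz0 : 0 < z := lt_of_lt_of_le hx hz.1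
        have hz1 : z < a/(2*(a+1)) := lt_of_le_of_lt hz.2 hβmax
        exact ((hasDerivAt_Gd ha hz0 hz1).differentiableAt.continuousAt).continuousWithinAt
      · rw [interior_Icc]
        intro z hz
        exact (hasDerivAt_Gd ha (lt_trans hx hz.1) (lt_trans hz.2 hβmax)).differentiableAt.differentiableWithinAt
      · rw [interior_Icc]
        intro z hz
        have hz0 : 0 < z := lt_trans hx hz.1
        have hz1 : z < a/(2*(a+1)) := lt_trans hz.2 hβmax
        rw [(hasDerivAt_Gd ha hz0 hz1).deriv]
        obtain ⟨h2, ht0, ht1⟩ := aux_bounds ha hz0 hz1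
        have hpos : 0 < tfun a z * (1 - tfun a z) * a^2 * (1-2*z)^3 := by
          have h3 : (0:ℝ) < (1-2*z)^3 := by positivity
          exact mul_pos (mul_pos (mul_pos ht0 (by linarith)) (by positivity)) h3
        exact le_of_lt (div_neg_of_neg_of_pos (by norm_num) hpos)
    have h := hanti (Set.left_mem_Icc.mpr hxβ0.le) (Set.right_mem_Icc.mpr hxβ0.le) hxβ0.le
    rw [hGdβ0] at h
    exact h
  have hmono : MonotoneOn (Ileak d) (Set.Icc 0 β0) := by
    apply monotoneOn_of_deriv_nonneg (convex_Icc _ _) hcontI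
    · rw [interior_Icc]; intro x hx
      exact (hcond x hx.1 (lt_trans hx.2 hβmax)).differentiableAt.differentiableWithinAt
    · rw [interior_Icc]; intro x hx
      rw [(hcond x hx.1 (lt_trans hx.2 hβmax)).deriv]
      exact mul_nonneg (by positivity) (hGdnonneg x hx.1 hx.2)
  have hconc : ConcaveOn ℝ (Set.Icc 0 β0) (Ileak d) := by
    apply (strictConcaveOn_of_deriv2_neg (convex_Icc _ _) hcontI ?_).concaveOn
    rw [interior_Icc]
    intro x hx
    have hx1 : x < a/(2*(a+1)) := lt_trans hx.2 hβmax
    have hxo : x ∈ Set.Ioo (0:ℝ) (a/(2*(a+1))) := ⟨hx.1, hx1⟩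
    have hev : deriv (Ileak d) =ᶠ[nhds x] (fun y => (Real.log 2)⁻¹ * Gd a y) := by
      filter_upwards [IsOpen.mem_nhds isOpen_Ioo hxo] with y hy
      exact (hcond y hy.1 hy.2).deriv
    have h2eq : deriv^[2] (Ileak d) x = deriv (fun y => (Real.log 2)⁻¹ * Gd a y) x := by
      show deriv (deriv (Ileak d)) x = _
      exact hev.deriv_eq
    rw [h2eq, ((hasDerivAt_Gd ha hx.1 hx1).const_mul ((Real.log 2)⁻¹)).deriv]
    obtain ⟨h2, ht0, ht1⟩ := aux_bounds ha hx.1 hx1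
    have hpos : 0 < tfun a x * (1 - tfun a x) * a^2 * (1-2*x)^3 := by
      have h3 : (0:ℝ) < (1-2*x)^3 := by positivity
      exact mul_pos (mul_pos (mul_pos ht0 (by linarith)) (by positivity)) h3
    exact mul_neg_of_pos_of_neg (by positivity) (div_neg_of_neg_of_pos (by norm_num) hpos)
  refine ⟨hconc, hmono, ?_⟩
  have hfin : (1/2) * ((d:ℝ)-2)/((d:ℝ)-1) = a/(2*(a+1)) := by
    rw [ha_def, div_eq_div_iff (ne_of_gt (by linarith : (0:ℝ) < (d:ℝ)-1)) (ne_of_gt (by linarith : (0:ℝ) < 2*(((d:ℝ)-2)+1)))]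
    ring
  rw [hfin]
  exact hβmax

lemma part2 : (∀ ε : ℝ, 0 < ε → ∃ C : ℝ, ∃ d0 : ℕ, ∀ d : ℕ, d0 ≤ d →
      ∀ β : ℝ, 0 < β → β ≤ 1 / 2 - ε →
        |Ileak d β -
            (2 * β / ((d : ℝ) - 2)) *
              Real.logb 2 (((d : ℝ) - 2) * (1 - 2 * β) * Real.exp 1 / (2 * β))| ≤
          C / (d : ℝ) ^ 2) := by
  intro ε hε
  refine ⟨2/(ε*Real.log 2), max 4 (⌈1/(2*ε)⌉₊ + 3), fun d hd β hβ hβ' => ?_⟩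
  have hd4 : (4:ℝ) ≤ (d:ℝ) := by
    have := le_trans (le_max_left 4 _) hd
    exact_mod_cast this
  set a : ℝ := (d:ℝ) - 2 with ha_def
  have ha2 : (2:ℝ) ≤ a := by rw [ha_def]; linarith
  have ha : 0 < a := by linarith
  have haε : 1 < 2*ε*a := by
    have h1 : (⌈1/(2*ε)⌉₊ + 3 : ℕ) ≤ d := le_trans (le_max_right _ _) hd
    have h2 : (⌈1/(2*ε)⌉₊ : ℝ) + 3 ≤ (d:ℝ) := by exact_mod_cast h1
    have h3 : 1/(2*ε) ≤ (⌈1/(2*ε)⌉₊ : ℝ) := Nat.le_ceil _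
    have h4 : 1/(2*ε) < a := by rw [ha_def]; linarith
    rw [div_lt_iff₀ (by positivity)] at h4
    nlinarith
  have h2β : 0 < 1 - 2*β := by nlinarith
  have h2βε : 2*ε ≤ 1 - 2*β := by nlinarith
  have hβhalf : 2*β < 1 := by nlinarith
  have hlog2 : (0:ℝ) < Real.log 2 := Real.log_pos (by norm_num)
  set t : ℝ := 2*β/(a*(1-2*β)) with ht_def
  have ht0 : 0 < t := by positivity
  have ht1 : t < 1 := by
    rw [ht_def, div_lt_one (by positivity)]
    nlinarith
  have h1t : 0 < 1 - t := by linarith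
  have harg : (1 / a) * (2 * β / (1 - 2 * β)) = t := by
    rw [ht_def]; field_simp
  have hlogt : Real.log t = Real.log (2*β) - Real.log (a*(1-2*β)) := by
    rw [ht_def, Real.log_div (by positivity) (by positivity)]
  have hlogarg : Real.log (a * (1 - 2*β) * Real.exp 1 / (2*β))
      = Real.log (a*(1-2*β)) + 1 - Real.log (2*β) := by
    rw [Real.log_div (by positivity) (by positivity),
      Real.log_mul (by positivity) (Real.exp_ne_zero 1), Real.log_exp]
  have hkey : Ileak d β -
      (2 * β / a) * Real.logb 2 (a * (1 - 2 * β) * Real.exp 1 / (2 * β))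
      = (1-2*β) * (-(1-t)*Real.log (1-t) - t) / Real.log 2 := by
    unfold Ileak binEnt
    rw [harg]
    simp only [Real.logb, hlogt, hlogarg]
    set L := Real.log (1 - t) with hL
    rw [ht_def]
    field_simp
    ring
  rw [hkey]
  -- bound |φ(t)| ≤ t²
  have hlogle1 : -Real.log (1-t) ≤ t/(1-t) := by
    have := Real.log_le_sub_one_of_pos (x := (1-t)⁻¹) (by positivity)
    rw [Real.log_inv] at this
    have : -Real.log (1-t) ≤ (1-t)⁻¹ - 1 := this
    have he : (1-t)⁻¹ - 1 = t/(1-t) := by field_simp; ring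
    linarith [he ▸ this]
  have hφ_le : -(1-t)*Real.log (1-t) - t ≤ 0 := by
    have h := mul_le_mul_of_nonneg_left hlogle1 h1t.le
    rw [mul_div_cancel₀] at h
    · nlinarith
    · exact h1t.ne'
  have hlogle2 : Real.log (1-t) ≤ -t := by
    have := Real.log_le_sub_one_of_pos h1t
    linarith
  have hφ_ge : -(t^2) ≤ -(1-t)*Real.log (1-t) - t := by nlinarith
  have habs : |(1-2*β) * (-(1-t)*Real.log (1-t) - t) / Real.log 2|
      ≤ (1-2*β) * t^2 / Real.log 2 := by
    rw [abs_div, abs_of_pos hlog2, abs_mul, abs_of_pos h2β]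
    have : |(-(1-t)*Real.log (1-t) - t)| ≤ t^2 := by
      rw [abs_le]
      exact ⟨by linarith, by linarith [sq_nonneg t]⟩
    gcongr
  refine le_trans habs ?_
  -- (1-2β) t² = 4β²/(a²(1-2β)) ≤ 1/(2ε a²) ≤ 2/(ε d²)
  have h1 : (1-2*β) * t^2 = 4*β^2/(a^2*(1-2*β)) := by
    rw [ht_def]; field_simp; ring
  have h2 : 4*β^2/(a^2*(1-2*β)) ≤ 1/(2*ε*a^2) := by
    rw [div_le_div_iff₀ (by positivity) (by positivity)]
    have hb : 4*β^2 ≤ 1 := by nlinarith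
    have h5 := mul_le_mul_of_nonneg_right hb (by positivity : (0:ℝ) ≤ 2*ε*a^2)
    have h6 := mul_le_mul_of_nonneg_right h2βε (by positivity : (0:ℝ) ≤ a^2)
    nlinarith
  have hda : (d:ℝ)^2 ≤ 4*a^2 := by
    have : (d:ℝ) ≤ 2*a := by rw [ha_def]; linarith
    nlinarith [hd4]
  have h3 : 1/(2*ε*a^2) ≤ 2/(ε*(d:ℝ)^2) := by
    rw [div_le_div_iff₀ (by positivity) (by positivity)]
    nlinarith
  calc (1-2*β)*t^2/Real.log 2 ≤ (1/(2*ε*a^2))/Real.log 2 := by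
        rw [h1]; gcongr
    _ ≤ (2/(ε*(d:ℝ)^2))/Real.log 2 := by gcongr
    _ = 2/(ε*Real.log 2)/(d:ℝ)^2 := by
        field_simp

/-- for `d ≥ 3` and `y_d` the unique positive root of `y^{d−1} + y − 1`,
with `β_0 = (1/2)[1 + 1/((d−2)(1−y_d))]⁻¹`, the function `I` is concave and increasing on
`[0, β_0]`, `β_0 < (1/2)(d−2)/(d−1)`, and as `d → ∞` (for `β` bounded away from `1/2`)
`I(β) = (2β/(d−2))·log₂((d−2)(1−2β)e/(2β)) + O(d^{−2})`. -/
theorem Ileak_properties :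
    (∀ d : ℕ, 3 ≤ d → ∀ yd : ℝ, 0 < yd → yd ^ (d - 1) + yd - 1 = 0 →
      let β0 : ℝ := (1 / 2) * (1 + 1 / (((d : ℝ) - 2) * (1 - yd)))⁻¹
      ConcaveOn ℝ (Set.Icc 0 β0) (Ileak d) ∧
      MonotoneOn (Ileak d) (Set.Icc 0 β0) ∧
      β0 < (1 / 2) * ((d : ℝ) - 2) / ((d : ℝ) - 1)) ∧
    (∀ ε : ℝ, 0 < ε → ∃ C : ℝ, ∃ d0 : ℕ, ∀ d : ℕ, d0 ≤ d →
      ∀ β : ℝ, 0 < β → β ≤ 1 / 2 - ε →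
        |Ileak d β -
            (2 * β / ((d : ℝ) - 2)) *
              Real.logb 2 (((d : ℝ) - 2) * (1 - 2 * β) * Real.exp 1 / (2 * β))| ≤
          C / (d : ℝ) ^ 2) := ⟨part1, part2⟩
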